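/- arXiv:cs/9809027 — 2 statements merged into one kernel-verified Lean document; each statement's English description precedes it below -/
import Mathlib

section
/- Let g_1, …, g_k : [0,1]^k → [0,1] be multivariate polynomials with nonnegative coefficients satisfying g_i(1,…,1) = 1 for each i, and let M be the k×k Jacobian matrix M_{i,j} = ∂g_i/∂s_j evaluated at (1,…,1). If every row sum of M is strictly less than 1, then the iteration s⁽⁰⁾ = (0,…,0), s⁽ⁿ⁺¹⁾ = (g_1(s⁽ⁿ⁾), …, g_k(s⁽ⁿ⁾)) converges to (1,…,1). -/
open MvPolynomial Finset

private lemma aux_one_sub_pow_le (s : ℝ) (hs0 : 0 ≤ s) (hs1 : s ≤ 1) (n : ℕ) :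
    1 - s ^ n ≤ n * (1 - s) := by
  induction n with
  | zero => simp
  | succ n ih =>
    have hpow : s ^ n ≤ 1 := pow_le_one₀ hs0 hs1
    have hpow0 : 0 ≤ s ^ n := pow_nonneg hs0 n
    push_cast
    rw [pow_succ]
    nlinarith [mul_nonneg (sub_nonneg.mpr hs1) (sub_nonneg.mpr hpow)]

private lemma aux_one_sub_prod_le {k : ℕ} (s : Fin k → ℝ) (h0 : ∀ j, 0 ≤ s j)
    (h1 : ∀ j, s j ≤ 1) (d : Fin k →₀ ℕ) (T : Finset (Fin k)) :
    1 - ∏ j ∈ T, s j ^ d j ≤ ∑ j ∈ T, (d j : ℝ) * (1 - s j) := by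
  classical
  induction T using Finset.induction_on with
  | empty => simp
  | insert _ _ hnot ih =>
    rename_i a T
    rw [Finset.prod_insert hnot, Finset.sum_insert hnot]
    have hb0 : 0 ≤ ∏ j ∈ T, s j ^ d j :=
      Finset.prod_nonneg fun j _ => pow_nonneg (h0 j) _
    have hb1 : ∏ j ∈ T, s j ^ d j ≤ 1 :=
      Finset.prod_le_one (fun j _ => pow_nonneg (h0 j) _)
        (fun j _ => pow_le_one₀ (h0 j) (h1 j))
    have ha0 : 0 ≤ s a ^ d a := pow_nonneg (h0 a) _
    have ha1 : s a ^ d a ≤ 1 := pow_le_one₀ (h0 a) (h1 a)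
    have hpa := aux_one_sub_pow_le (s a) (h0 a) (h1 a) (d a)
    nlinarith

private lemma aux_eval_one_pderiv {k : ℕ} (p : MvPolynomial (Fin k) ℝ) (j : Fin k) :
    MvPolynomial.eval (fun _ => (1 : ℝ)) (MvPolynomial.pderiv j p)
      = ∑ d ∈ p.support, p.coeff d * (d j : ℝ) := by
  conv_lhs => rw [p.as_sum]
  rw [map_sum, map_sum]
  refine Finset.sum_congr rfl fun d _ => ?_
  rw [pderiv_monomial, eval_monomial]
  simp [Finsupp.prod]

/-- Multitype branching-process consistency criterion, n = 1 Geršgorin test: if the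
adjunction generating functions g_i are polynomials with nonnegative coefficients,
g_i(1,…,1) = 1, and every row sum of the Jacobian at 1 is < 1, then the level iterates
starting from 0 converge to (1,…,1). -/
theorem iterates_tendsto_one_of_jacobian_rowSums_lt_one {k : ℕ}
    (g : Fin k → MvPolynomial (Fin k) ℝ)
    (hcoeff : ∀ i m, 0 ≤ (g i).coeff m)
    (h1 : ∀ i, MvPolynomial.eval (fun _ => (1 : ℝ)) (g i) = 1)
    (M : Matrix (Fin k) (Fin k) ℝ)
    (hM : ∀ i j, M i j = MvPolynomial.eval (fun _ => (1 : ℝ)) (MvPolynomial.pderiv j (g i)))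
    (hrow : ∀ i, ∑ j, M i j < 1) :
    Filter.Tendsto
      (fun n => (fun s : Fin k → ℝ => fun i => MvPolynomial.eval s (g i))^[n] (fun _ => 0))
      Filter.atTop (nhds (fun _ => 1)) := by
  classical
  rcases Nat.eq_zero_or_pos k with hk | hk
  · subst hk
    have : (fun n => (fun s : Fin 0 → ℝ => fun i => MvPolynomial.eval s (g i))^[n]
        (fun _ => 0)) = fun _ => (fun _ => (1 : ℝ)) := by
      funext n
      exact Subsingleton.elim _ _
    rw [this]
    exact tendsto_const_nhds
  have : NeZero k := ⟨hk.ne'⟩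
  have hne : (Finset.univ : Finset (Fin k)).Nonempty := Finset.univ_nonempty
  set F : (Fin k → ℝ) → (Fin k → ℝ) := fun s i => MvPolynomial.eval s (g i) with hF
  -- M entries formula and nonnegativity
  have hMeq : ∀ i j, M i j = ∑ d ∈ (g i).support, (g i).coeff d * (d j : ℝ) := by
    intro i j; rw [hM i j, aux_eval_one_pderiv]
  have hM0 : ∀ i j, 0 ≤ M i j := by
    intro i j; rw [hMeq]
    exact Finset.sum_nonneg fun d _ => mul_nonneg (hcoeff i d) (Nat.cast_nonneg _)
  -- the contraction factor
  set ρ : ℝ := max 0 (Finset.univ.sup' hne fun i => ∑ j, M i j) with hρ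
  have hρ0 : 0 ≤ ρ := le_max_left _ _
  have hρ1 : ρ < 1 := by
    apply max_lt one_pos
    exact (Finset.sup'_lt_iff hne).mpr fun i _ => hrow i
  have hρrow : ∀ i, ∑ j, M i j ≤ ρ :=
    fun i => le_trans (Finset.le_sup' (fun i => ∑ j, M i j) (Finset.mem_univ i)) (le_max_right _ _)
  -- evaluation formulas
  have heval : ∀ (s : Fin k → ℝ) i,
      F s i = ∑ d ∈ (g i).support, (g i).coeff d * ∏ j, s j ^ d j := by
    intro s i; simp only [hF]; rw [MvPolynomial.eval_eq']
  have hone : ∀ i, ∑ d ∈ (g i).support, (g i).coeff d = (1 : ℝ) := by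
    intro i
    rw [← h1 i, MvPolynomial.eval_eq']
    simp
  -- key mean value inequality
  have hkey : ∀ s : Fin k → ℝ, (∀ j, 0 ≤ s j) → (∀ j, s j ≤ 1) →
      ∀ i, 1 - F s i ≤ ∑ j, M i j * (1 - s j) := by
    intro s hs0 hs1 i
    have hrhs : ∑ j, M i j * (1 - s j)
        = ∑ d ∈ (g i).support, (g i).coeff d * ∑ j, (d j : ℝ) * (1 - s j) := by
      calc ∑ j, M i j * (1 - s j)
          = ∑ j, ∑ d ∈ (g i).support, (g i).coeff d * ((d j : ℝ) * (1 - s j)) := by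
            refine Finset.sum_congr rfl fun j _ => ?_
            rw [hMeq, Finset.sum_mul]
            exact Finset.sum_congr rfl fun d _ => (mul_assoc _ _ _)
        _ = ∑ d ∈ (g i).support, ∑ j, (g i).coeff d * ((d j : ℝ) * (1 - s j)) :=
            Finset.sum_comm
        _ = ∑ d ∈ (g i).support, (g i).coeff d * ∑ j, (d j : ℝ) * (1 - s j) := by
            refine Finset.sum_congr rfl fun d _ => ?_
            rw [Finset.mul_sum]
    have hdiff : 1 - F s i
        = ∑ d ∈ (g i).support, (g i).coeff d * (1 - ∏ j, s j ^ d j) := by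
      rw [heval]
      simp only [mul_one_sub, Finset.sum_sub_distrib]
      rw [hone]
    rw [hdiff, hrhs]
    refine Finset.sum_le_sum fun d _ => ?_
    exact mul_le_mul_of_nonneg_left
      (aux_one_sub_prod_le s hs0 hs1 d Finset.univ) (hcoeff i d)
  -- range preservation
  have hrange : ∀ s : Fin k → ℝ, (∀ j, 0 ≤ s j) → (∀ j, s j ≤ 1) →
      (∀ i, 0 ≤ F s i) ∧ (∀ i, F s i ≤ 1) := by
    intro s hs0 hs1
    constructor
    · intro i
      rw [heval]
      refine Finset.sum_nonneg fun d _ => mul_nonneg (hcoeff i d) ?_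
      exact Finset.prod_nonneg fun j _ => pow_nonneg (hs0 j) _
    · intro i
      rw [heval]
      calc ∑ d ∈ (g i).support, (g i).coeff d * ∏ j, s j ^ d j
          ≤ ∑ d ∈ (g i).support, (g i).coeff d := by
            refine Finset.sum_le_sum fun d _ => ?_
            refine mul_le_of_le_one_right (hcoeff i d) ?_
            exact Finset.prod_le_one (fun j _ => pow_nonneg (hs0 j) _)
              (fun j _ => pow_le_one₀ (hs0 j) (hs1 j))
        _ = 1 := hone i
  -- main induction
  have hmain : ∀ n,
      (∀ i, 0 ≤ (F^[n] (fun _ => 0)) i) ∧ (∀ i, (F^[n] (fun _ => 0)) i ≤ 1) ∧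
      (∀ i, 1 - (F^[n] (fun _ => 0)) i ≤ ρ ^ n) := by
    intro n
    induction n with
    | zero => exact ⟨fun i => le_refl 0, fun i => zero_le_one, fun i => by simp⟩
    | succ n ih =>
      obtain ⟨ih0, ih1, ihd⟩ := ih
      rw [Function.iterate_succ_apply']
      obtain ⟨h0', h1'⟩ := hrange _ ih0 ih1
      refine ⟨h0', h1', fun i => ?_⟩
      have h := hkey _ ih0 ih1 i
      have h2 : ∑ j, M i j * (1 - (F^[n] (fun _ => 0)) j) ≤ ∑ j, M i j * ρ ^ n :=
        Finset.sum_le_sum fun j _ => mul_le_mul_of_nonneg_left (ihd j) (hM0 i j)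
      have h3 : ∑ j, M i j * ρ ^ n = (∑ j, M i j) * ρ ^ n := (Finset.sum_mul _ _ _).symm
      have h4 : (∑ j, M i j) * ρ ^ n ≤ ρ * ρ ^ n :=
        mul_le_mul_of_nonneg_right (hρrow i) (pow_nonneg hρ0 n)
      calc 1 - F (F^[n] (fun _ => 0)) i
          ≤ ∑ j, M i j * (1 - (F^[n] (fun _ => 0)) j) := h
        _ ≤ ρ * ρ ^ n := by linarith
        _ = ρ ^ (n + 1) := (pow_succ' ρ n).symm
  -- conclude by squeezing coordinatewise
  rw [tendsto_pi_nhds]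
  intro i
  have hlow : Filter.Tendsto (fun n : ℕ => 1 - ρ ^ n) Filter.atTop (nhds 1) := by
    have := tendsto_pow_atTop_nhds_zero_of_lt_one hρ0 hρ1
    have := (tendsto_const_nhds : Filter.Tendsto (fun _ : ℕ => (1 : ℝ)) _ (nhds 1)).sub this
    simpa using this
  refine tendsto_of_tendsto_of_tendsto_of_le_of_le hlow tendsto_const_nhds
    (fun n => ?_) (fun n => (hmain n).2.1 i)
  have := (hmain n).2.2 i
  linarith
end

section
/- Let g : [0,1]^k → [0,1]^k be coordinatewise monotone (s ≤ t implies g(s) ≤ g(t) componentwise) and continuous with g(1,…,1) = (1,…,1), and suppose there is a nonnegative matrix M with ρ(M) < 1 such that (1 − g(s)_i) ≤ ∑_j M_{i,j}(1 − s_j) for all s ∈ [0,1]^k. Then the iterates of g starting at (0,…,0) converge to (1,…,1). -/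
open Filter

attribute [local instance] Matrix.linftyOpNormedRing Matrix.linftyOpNormedAlgebra

theorem auxPowNormTendstoZero {k : ℕ} [NeZero k] (A : Matrix (Fin k) (Fin k) ℂ)
    (h : spectralRadius ℂ A < 1) :
    Tendsto (fun n => ‖A ^ n‖) atTop (nhds 0) := by
  obtain ⟨r, hr1, hr2⟩ := ENNReal.lt_iff_exists_nnreal_btwn.1 h
  have hG := spectrum.pow_nnnorm_pow_one_div_tendsto_nhds_spectralRadius A
  have hev : ∀ᶠ n : ℕ in atTop, (‖A ^ n‖₊ : ENNReal) ^ (1 / (n:ℝ)) < r :=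
    hG.eventually_lt_const hr1
  have hev2 : ∀ᶠ n : ℕ in atTop, ‖A ^ n‖ ≤ (r:ℝ) ^ n := by
    filter_upwards [hev, eventually_ge_atTop 1] with n hn hn1
    have hx : ((‖A ^ n‖₊ : ENNReal) ^ (1 / (n:ℝ))) ^ (n:ℝ) ≤ (r:ENNReal) ^ (n:ℝ) :=
      ENNReal.rpow_le_rpow hn.le (by positivity)
    rw [← ENNReal.rpow_mul, one_div_mul_cancel (by exact_mod_cast Nat.one_le_iff_ne_zero.mp hn1),
      ENNReal.rpow_one, ENNReal.rpow_natCast, ← ENNReal.coe_pow, ENNReal.coe_le_coe] at hx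
    exact_mod_cast hx
  have hr2' : (r : ℝ) < 1 := by exact_mod_cast hr2
  have hg : Tendsto (fun n : ℕ => (r:ℝ) ^ n) atTop (nhds 0) :=
    tendsto_pow_atTop_nhds_zero_of_lt_one r.coe_nonneg hr2'
  exact squeeze_zero' (Eventually.of_forall fun n => norm_nonneg _) hev2 hg

theorem auxSpectralRadiusLtOne {k : ℕ} [NeZero k] (A : Matrix (Fin k) (Fin k) ℂ)
    (h : sSup {x : ℝ | ∃ μ ∈ spectrum ℂ A, x = ‖μ‖} < 1) :
    spectralRadius ℂ A < 1 := by
  have hfin : (spectrum ℂ A).Finite := A.finite_spectrum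
  have hset : {x : ℝ | ∃ μ ∈ spectrum ℂ A, x = ‖μ‖}
      = (fun μ : ℂ => ‖μ‖) '' spectrum ℂ A := by
    ext x; simp [Set.mem_image, eq_comm]
  have hbdd : BddAbove {x : ℝ | ∃ μ ∈ spectrum ℂ A, x = ‖μ‖} := by
    rw [hset]; exact (hfin.image _).bddAbove
  have hle : spectralRadius ℂ A ≤ ENNReal.ofReal
      (sSup {x : ℝ | ∃ μ ∈ spectrum ℂ A, x = ‖μ‖}) := by
    rw [spectralRadius]
    refine iSup₂_le fun μ hμ => ?_
    have h1 : ‖μ‖ ≤ _ := le_csSup hbdd ⟨μ, hμ, rfl⟩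
    calc (‖μ‖₊ : ENNReal) = ENNReal.ofReal ‖μ‖ := (ofReal_norm μ).symm
      _ ≤ _ := ENNReal.ofReal_le_ofReal h1
  exact lt_of_le_of_lt hle (by exact_mod_cast ENNReal.ofReal_lt_one.mpr h)

/-- The spectral radius of a square complex matrix. -/
noncomputable def specRad {k : ℕ} (M : Matrix (Fin k) (Fin k) ℂ) : ℝ :=
  sSup {x : ℝ | ∃ μ ∈ spectrum ℂ M, x = ‖μ‖}

/-- Abstract version of the consistency theorem: a monotone continuous self-map of the
unit box fixing (1,…,1), whose distance from 1 is dominated by a nonnegative matrix with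
spectral radius < 1, has iterates from 0 converging to (1,…,1). -/
theorem iterates_tendsto_one_of_specRad_lt_one {k : ℕ}
    (g : (Fin k → ℝ) → (Fin k → ℝ))
    (hmono : ∀ s t : Fin k → ℝ, s ∈ Set.Icc 0 1 → t ∈ Set.Icc 0 1 → s ≤ t → g s ≤ g t)
    (hcont : ContinuousOn g (Set.Icc 0 1))
    (hmaps : Set.MapsTo g (Set.Icc 0 1) (Set.Icc 0 1))
    (h1 : g 1 = 1)
    (M : Matrix (Fin k) (Fin k) ℝ)
    (hMnn : ∀ i j, 0 ≤ M i j)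
    (hρ : specRad (M.map (Complex.ofReal ·)) < 1)
    (hbound : ∀ s ∈ Set.Icc (0 : Fin k → ℝ) 1, ∀ i, 1 - g s i ≤ ∑ j, M i j * (1 - s j)) :
    Filter.Tendsto (fun n => g^[n] 0) Filter.atTop (nhds 1) := by
  rcases Nat.eq_zero_or_pos k with hk | hk
  · subst hk
    have he : (fun n => g^[n] (0 : Fin 0 → ℝ)) = fun _ => 1 :=
      funext fun n => funext fun i => i.elim0
    rw [he]; exact tendsto_const_nhds
  haveI : NeZero k := ⟨hk.ne'⟩
  set A := M.map (Complex.ofReal ·) with hA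
  have hx0 : (0 : Fin k → ℝ) ∈ Set.Icc (0 : Fin k → ℝ) 1 :=
    Set.mem_Icc.mpr ⟨le_rfl, fun i => zero_le_one⟩
  have hxmem : ∀ n, g^[n] 0 ∈ Set.Icc (0 : Fin k → ℝ) 1 := fun n => hmaps.iterate n hx0
  have hpow_nn : ∀ n, ∀ i j, 0 ≤ (M ^ n) i j := by
    intro n
    induction n with
    | zero => intro i j; rw [pow_zero, Matrix.one_apply]; split <;> norm_num
    | succ n ih =>
      intro i j
      rw [pow_succ, Matrix.mul_apply]
      exact Finset.sum_nonneg fun l _ => mul_nonneg (ih i l) (hMnn l j)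
  have hkey : ∀ n, ∀ i, 1 - g^[n] 0 i ≤ ∑ j, (M ^ n) i j := by
    intro n
    induction n with
    | zero =>
      intro i
      simp [Matrix.one_apply, Pi.zero_apply]
    | succ n ih =>
      intro i
      rw [Function.iterate_succ_apply']
      calc 1 - g (g^[n] 0) i ≤ ∑ j, M i j * (1 - g^[n] 0 j) := hbound _ (hxmem n) i
        _ ≤ ∑ j, M i j * (∑ l, (M ^ n) j l) :=
            Finset.sum_le_sum fun j _ => mul_le_mul_of_nonneg_left (ih j) (hMnn i j)
        _ = ∑ l, (M ^ (n + 1)) i l := by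
            simp only [pow_succ', Matrix.mul_apply, Finset.mul_sum]
            rw [Finset.sum_comm]
  have hAn : ∀ n, A ^ n = (M ^ n).map (Complex.ofReal ·) := by
    intro n
    have := map_pow (Complex.ofRealHom.mapMatrix : Matrix (Fin k) (Fin k) ℝ →+* _) M n
    exact this.symm
  have hnormbound : ∀ n i, (∑ j, (M ^ n) i j) ≤ ‖A ^ n‖ := by
    intro n i
    have h1' : ∑ j, (M ^ n) i j = ((∑ j, ‖(A ^ n) i j‖₊ : NNReal) : ℝ) := by
      rw [hAn n]
      push_cast
      refine Finset.sum_congr rfl fun j _ => ?_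
      simp [Matrix.map_apply, Complex.norm_real, abs_of_nonneg (hpow_nn n i j)]
    rw [h1', Matrix.linfty_opNorm_def]
    exact NNReal.coe_le_coe.mpr
      (Finset.le_sup (f := fun i => ∑ j, ‖(A ^ n) i j‖₊) (Finset.mem_univ i))
  have hρ' : spectralRadius ℂ A < 1 := auxSpectralRadiusLtOne A hρ
  have h0 : Tendsto (fun n => ‖A ^ n‖) atTop (nhds 0) := auxPowNormTendstoZero A hρ'
  rw [tendsto_pi_nhds]
  intro i
  have hlow : Tendsto (fun n => 1 - ‖A ^ n‖) atTop (nhds ((1 : Fin k → ℝ) i)) := by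
    have := (tendsto_const_nhds : Tendsto (fun _ : ℕ => (1:ℝ)) atTop (nhds 1)).sub h0
    simpa using this
  refine tendsto_of_tendsto_of_tendsto_of_le_of_le hlow tendsto_const_nhds
    (fun n => ?_) (fun n => (hxmem n).2 i)
  have := hkey n i
  have := hnormbound n i
  linarith
end
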